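/- Let X_1, …, X_C be real-valued random variables defined on a common probability space such that for each j the law of X_j is the Gaussian distribution with mean μ_j and variance σ_j² (no independence or joint-Gaussianity assumption is made). Then E[log(∑_{j=1}^C exp(X_j))] ≤ log(∑_{j=1}^C exp(μ_j + σ_j²/2)). -/

import Mathlib

open MeasureTheory ProbabilityTheory Real

lemma gaussianPDFReal_mul_exp (m : ℝ) {v : NNReal} (hv : v ≠ 0) (x : ℝ) :
    gaussianPDFReal m v x * rexp x = rexp (m + v / 2) * gaussianPDFReal (m + v) v x := by
  have hv' : (v : ℝ) ≠ 0 := by exact_mod_cast hv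
  simp only [gaussianPDFReal]
  have h : -(x - m) ^ 2 / (2 * (v:ℝ)) + x = (m + (v:ℝ) / 2) + -(x - (m + (v:ℝ))) ^ 2 / (2 * (v:ℝ)) := by
    field_simp
    ring
  rw [mul_assoc, ← Real.exp_add, h, Real.exp_add]
  ring

lemma integrable_exp_gaussianReal (m : ℝ) (v : NNReal) :
    Integrable rexp (gaussianReal m v) := by
  by_cases hv : v = 0
  · subst hv
    rw [gaussianReal_zero_var]
    refine (integrable_const (rexp m)).congr ?_
    rw [Filter.EventuallyEq, ae_dirac_iff (measurableSet_eq_fun measurable_const Real.measurable_exp)]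
  · rw [gaussianReal_of_var_ne_zero _ hv]
    have : gaussianPDF m v = fun x => ((gaussianPDFReal m v x).toNNReal : ENNReal) := by
      ext x; simp [gaussianPDF, ENNReal.ofReal]
    rw [this, integrable_withDensity_iff_integrable_smul
      ((measurable_gaussianPDFReal m v).real_toNNReal)]
    have heq : (fun x => ((gaussianPDFReal m v x).toNNReal : NNReal) • rexp x)
        = fun x => rexp (m + v / 2) * gaussianPDFReal (m + v) v x := by
      ext x
      rw [NNReal.smul_def, smul_eq_mul, Real.coe_toNNReal _ (gaussianPDFReal_nonneg m v x),
        gaussianPDFReal_mul_exp m hv x]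
    rw [heq]
    exact (integrable_gaussianPDFReal (m + v) v).const_mul _

lemma integral_exp_gaussianReal (m : ℝ) (v : NNReal) :
    ∫ x, rexp x ∂(gaussianReal m v) = rexp (m + v / 2) := by
  by_cases hv : v = 0
  · subst hv
    rw [gaussianReal_zero_var, integral_dirac]
    norm_num
  · rw [gaussianReal_of_var_ne_zero _ hv]
    have : gaussianPDF m v = fun x => ((gaussianPDFReal m v x).toNNReal : ENNReal) := by
      ext x; simp [gaussianPDF, ENNReal.ofReal]
    rw [this, integral_withDensity_eq_integral_smul
      ((measurable_gaussianPDFReal m v).real_toNNReal)]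
    have heq : (fun x => ((gaussianPDFReal m v x).toNNReal : NNReal) • rexp x)
        = fun x => rexp (m + v / 2) * gaussianPDFReal (m + v) v x := by
      ext x
      rw [NNReal.smul_def, smul_eq_mul, Real.coe_toNNReal _ (gaussianPDFReal_nonneg m v x),
        gaussianPDFReal_mul_exp m hv x]
    rw [heq, integral_const_mul, integral_gaussianPDFReal_eq_one _ hv, mul_one]
/-- If `X 1, …, X C` are real random variables on a common probability
space such that each `X j` has Gaussian law with mean `m j` and variance `v j` (no joint
independence or joint Gaussianity assumed), then
`E[log ∑ j exp (X j)] ≤ log ∑ j exp (m j + v j / 2)`. -/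
theorem expected_log_sum_exp_gaussian_bound
    {Ω : Type*} [MeasurableSpace Ω] (μ : Measure Ω) [IsProbabilityMeasure μ]
    {C : ℕ} (X : Fin C → Ω → ℝ)
    (hXmeas : ∀ j, Measurable (X j))
    (m : Fin C → ℝ) (v : Fin C → NNReal)
    (hlaw : ∀ j, μ.map (X j) = gaussianReal (m j) (v j)) :
    ∫ ω, Real.log (∑ j, Real.exp (X j ω)) ∂μ
      ≤ Real.log (∑ j, Real.exp (m j + (v j : ℝ) / 2)) := by
  rcases Nat.eq_zero_or_pos C with hC | hC
  · subst hC
    simp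
  haveI : NeZero C := ⟨hC.ne'⟩
  set Y : Ω → ℝ := fun ω => ∑ j, rexp (X j ω) with hY
  set S : ℝ := ∑ j, rexp (m j + (v j : ℝ) / 2) with hSdef
  have hexpint : ∀ j, Integrable (fun ω => rexp (X j ω)) μ := by
    intro j
    have h := integrable_exp_gaussianReal (m j) (v j)
    rw [← hlaw j] at h
    exact (integrable_map_measure Real.continuous_exp.aestronglyMeasurable
      (hXmeas j).aemeasurable).mp h
  have hexpval : ∀ j, ∫ ω, rexp (X j ω) ∂μ = rexp (m j + (v j : ℝ) / 2) := by
    intro j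
    rw [← integral_exp_gaussianReal (m j) (v j), ← hlaw j,
      integral_map (hXmeas j).aemeasurable Real.continuous_exp.aestronglyMeasurable]
  have hYmeas : Measurable Y := Finset.measurable_sum _ fun j _ => (hXmeas j).exp
  have hYint : Integrable Y μ := integrable_finset_sum _ fun j _ => hexpint j
  have hYval : ∫ ω, Y ω ∂μ = S := by
    rw [hY, integral_finset_sum _ fun j _ => hexpint j]
    exact Finset.sum_congr rfl fun j _ => hexpval j
  have hS : 0 < S := Finset.sum_pos (fun j _ => Real.exp_pos _) Finset.univ_nonempty
  have hYpos : ∀ ω, 0 < Y ω := fun ω =>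
    Finset.sum_pos (fun j _ => Real.exp_pos _) Finset.univ_nonempty
  set g : Ω → ℝ := fun ω => Real.log S + Y ω / S - 1 with hg
  have hgint : Integrable g μ :=
    ((integrable_const (Real.log S)).add (hYint.div_const S)).sub (integrable_const 1)
  have hpt : ∀ ω, Real.log (Y ω) ≤ g ω := by
    intro ω
    have h1 := Real.log_le_sub_one_of_pos (div_pos (hYpos ω) hS)
    rw [Real.log_div (hYpos ω).ne' hS.ne'] at h1
    simp only [hg]
    linarith
  -- integrability of the logarithm, via a Gaussian lower bound
  set j0 : Fin C := ⟨0, hC⟩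
  have hlo : ∀ ω, X j0 ω ≤ Real.log (Y ω) := by
    intro ω
    have h1 : rexp (X j0 ω) ≤ Y ω :=
      Finset.single_le_sum (fun j _ => (Real.exp_pos (X j ω)).le) (Finset.mem_univ j0)
    have h2 := Real.log_le_log (Real.exp_pos _) h1
    rwa [Real.log_exp] at h2
  have hexpnegint : Integrable (fun ω => rexp (-(X j0 ω))) μ := by
    have hmap : μ.map (fun ω => -(X j0 ω)) = gaussianReal (-(m j0)) (⟨1, one_pos.le⟩ * v j0) := by
      have : (fun ω => -(X j0 ω)) = (fun x : ℝ => (-1 : ℝ) * x) ∘ X j0 := by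
        ext ω; simp
      have hm : Measurable fun x : ℝ => (-1 : ℝ) * x := by fun_prop
      rw [this, ← Measure.map_map hm (hXmeas j0), hlaw j0]
      have := gaussianReal_map_const_mul (μ := m j0) (v := v j0) (-1)
      simp only [neg_one_mul] at this ⊢
      convert this using 3
      norm_num
      exact one_mul (v j0)
    have h := integrable_exp_gaussianReal (-(m j0)) (⟨1, one_pos.le⟩ * v j0)
    rw [← hmap] at h
    exact (integrable_map_measure Real.continuous_exp.aestronglyMeasurable
      ((hXmeas j0).neg.aemeasurable)).mp h
  have hXj0int : Integrable (X j0) μ := by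
    refine Integrable.mono' ((hexpint j0).add hexpnegint)
      (hXmeas j0).aestronglyMeasurable (Filter.Eventually.of_forall fun ω => ?_)
    rw [Real.norm_eq_abs]
    simp only [Pi.add_apply]
    rcases le_total 0 (X j0 ω) with h | h
    · rw [abs_of_nonneg h]
      have := Real.add_one_le_exp (X j0 ω)
      have := (Real.exp_pos (-(X j0 ω))).le
      linarith
    · rw [abs_of_nonpos h]
      have := Real.add_one_le_exp (-(X j0 ω))
      have := (Real.exp_pos (X j0 ω)).le
      linarith
  have hlogint : Integrable (fun ω => Real.log (Y ω)) μ := by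
    refine Integrable.mono' (hXj0int.abs.add hgint.abs)
      hYmeas.log.aestronglyMeasurable (Filter.Eventually.of_forall fun ω => ?_)
    rw [Real.norm_eq_abs, abs_le]
    constructor
    · have h1 : -|X j0 ω| ≤ X j0 ω := neg_abs_le _
      have h2 : (0:ℝ) ≤ |g ω| := abs_nonneg _
      have := hlo ω
      simp only [Pi.add_apply]
      linarith
    · have h1 : g ω ≤ |g ω| := le_abs_self _
      have h2 : (0:ℝ) ≤ |X j0 ω| := abs_nonneg _
      have := hpt ω
      simp only [Pi.add_apply]
      linarith
  have hgval : ∫ ω, g ω ∂μ = Real.log S := by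
    have hint1 : Integrable (fun ω => Real.log S + Y ω / S) μ :=
      (integrable_const _).add (hYint.div_const S)
    have h1 : ∫ ω, g ω ∂μ = (∫ ω, (Real.log S + Y ω / S) ∂μ) - ∫ _ω, (1 : ℝ) ∂μ :=
      integral_sub hint1 (integrable_const 1)
    have h2 : ∫ ω, (Real.log S + Y ω / S) ∂μ
        = (∫ _ω, Real.log S ∂μ) + ∫ ω, Y ω / S ∂μ :=
      integral_add (integrable_const _) (hYint.div_const S)
    rw [h1, h2, integral_const, integral_const, integral_div, hYval, div_self hS.ne']
    simp
  calc ∫ ω, Real.log (Y ω) ∂μ ≤ ∫ ω, g ω ∂μ :=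
        integral_mono hlogint hgint fun ω => hpt ω
    _ = Real.log S := hgval
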